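/- Let E, Q be real n×n matrices with E^T Q = Q^T E positive semidefinite, B real n×m, and C = B^T Q. Then rank([E; C]) ≤ rank([E, B]), where [E; C] is the vertical stack of E over C and [E, B] is the horizontal concatenation of E and B. -/

import Mathlib

open Matrix Submodule Module

lemma aux_rank_nullity {K M : Type*} [Field K] [AddCommGroup M] [Module K M]
    [FiniteDimensional K M] (f : M →ₗ[K] M) (S : Submodule K M) :
    finrank K ↥(S.map f) + finrank K ↥(S ⊓ LinearMap.ker f) = finrank K ↥S := by
  have h := LinearMap.finrank_range_add_finrank_ker (f.domRestrict S)
  rw [LinearMap.range_domRestrict, LinearMap.ker_domRestrict] at h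
  have e : comap S.subtype (LinearMap.ker f) = comap S.subtype (S ⊓ LinearMap.ker f) := by
    rw [Submodule.comap_inf, Submodule.comap_subtype_self, top_inf_eq]
  rw [e, (Submodule.comapSubtypeEquivOfLe (inf_le_left : S ⊓ LinearMap.ker f ≤ S)).finrank_eq] at h
  exact h

lemma aux_key {K M : Type*} [Field K] [AddCommGroup M] [Module K M]
    [FiniteDimensional K M] (f : M →ₗ[K] M) (U V U' : Submodule K M)
    (hU : U.map f ≤ U') (hrank : finrank K ↥U' = finrank K ↥U) :
    finrank K ↥(U' ⊔ V.map f) ≤ finrank K ↥(U ⊔ V) := by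
  set W : Submodule K M := U ⊔ V with hW
  have h1 : finrank K ↥(U' ⊔ V.map f) ≤ finrank K ↥(U' ⊔ W.map f) :=
    Submodule.finrank_mono (sup_le_sup_left (Submodule.map_mono le_sup_right) U')
  have h2 := Submodule.finrank_sup_add_finrank_inf_eq U' (W.map f)
  have h3 : finrank K ↥(U.map f) ≤ finrank K ↥(U' ⊓ W.map f) :=
    Submodule.finrank_mono (le_inf hU (Submodule.map_mono le_sup_left))
  have h4 := aux_rank_nullity f W
  have h5 := aux_rank_nullity f U
  have h6 : finrank K ↥(U ⊓ LinearMap.ker f) ≤ finrank K ↥(W ⊓ LinearMap.ker f) :=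
    Submodule.finrank_mono (inf_le_inf_right _ le_sup_left)
  omega

lemma range_fromColumns {n p q : ℕ} (A : Matrix (Fin n) (Fin p) ℝ) (B : Matrix (Fin n) (Fin q) ℝ) :
    LinearMap.range (fromCols A B).mulVecLin
      = LinearMap.range A.mulVecLin ⊔ LinearMap.range B.mulVecLin := by
  apply le_antisymm
  · rintro x ⟨v, rfl⟩
    have : (fromCols A B).mulVecLin v
        = A.mulVecLin (v ∘ Sum.inl) + B.mulVecLin (v ∘ Sum.inr) := by
      have hv : v = Sum.elim (v ∘ Sum.inl) (v ∘ Sum.inr) := (Sum.elim_comp_inl_inr v).symm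
      simp only [Matrix.mulVecLin_apply]
      rw [← fromCols_mulVec_sumElim A B (v ∘ Sum.inl) (v ∘ Sum.inr), ← hv]
    rw [this]
    exact Submodule.add_mem_sup (LinearMap.mem_range_self _ _) (LinearMap.mem_range_self _ _)
  · apply sup_le
    · rintro x ⟨v, rfl⟩
      refine ⟨Sum.elim v 0, ?_⟩
      simp [Matrix.mulVecLin_apply, fromCols_mulVec_sumElim]
    · rintro x ⟨v, rfl⟩
      refine ⟨Sum.elim 0 v, ?_⟩
      simp [Matrix.mulVecLin_apply, fromCols_mulVec_sumElim]

theorem stmt_14 {n m : ℕ}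
    (E Q : Matrix (Fin n) (Fin n) ℝ)
    (B : Matrix (Fin n) (Fin m) ℝ) (C : Matrix (Fin m) (Fin n) ℝ)
    (hE : Eᵀ * Q = Qᵀ * E) (hEpsd : (Eᵀ * Q).PosSemidef)
    (hC : C = Bᵀ * Q) :
    (fromRows E C).rank ≤ (fromCols E B).rank := by
  subst hC
  have hT : (fromRows E (Bᵀ * Q)).rank = (fromCols Eᵀ (Qᵀ * B)).rank := by
    rw [← Matrix.rank_transpose (fromRows E (Bᵀ * Q)), transpose_fromRows, transpose_mul,
      transpose_transpose]
  rw [hT, Matrix.rank, Matrix.rank, range_fromColumns, range_fromColumns]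
  have hV' : LinearMap.range (Qᵀ * B).mulVecLin
      = (LinearMap.range B.mulVecLin).map Qᵀ.mulVecLin := by
    rw [Matrix.mulVecLin_mul, LinearMap.range_comp]
  rw [hV']
  apply aux_key
  · rw [← LinearMap.range_comp, ← Matrix.mulVecLin_mul, ← hE, Matrix.mulVecLin_mul,
      LinearMap.range_comp]
    exact LinearMap.map_le_range
  · exact E.rank_transpose
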